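/- For every S > 0, the distribution function of the terminal price under counterparty risk is P(S_T ≤ S) = e^{−λT}·Φ( (ln(S/S_0) − a(T)) / b(T) ) + Σ_{i=1}^{3} p_i ∫_0^T λ e^{−λt} Φ( (1/b(t))·( ln( S/(S_0(1−γ_i)) ) − a(t) ) ) dt. -/

import Mathlib

open MeasureTheory ProbabilityTheory

/-- The standard normal cumulative distribution function `Φ`. -/
noncomputable def stdNormalCDF (x : ℝ) : ℝ := (gaussianReal 0 1 (Set.Iic x)).toReal

open Set
open scoped ENNReal NNReal Real

lemma stdNormalCDF_nonneg (x : ℝ) : 0 ≤ stdNormalCDF x := ENNReal.toReal_nonneg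

lemma ofReal_stdNormalCDF (x : ℝ) :
    ENNReal.ofReal (stdNormalCDF x) = gaussianReal 0 1 (Set.Iic x) :=
  ENNReal.ofReal_toReal (measure_ne_top _ _)

lemma stdNormalCDF_le_one (x : ℝ) : stdNormalCDF x ≤ 1 := by
  have h := prob_le_one (μ := gaussianReal 0 1) (s := Set.Iic x)
  simpa [stdNormalCDF] using ENNReal.toReal_mono ENNReal.one_ne_top h

lemma stdNormalCDF_mono : Monotone stdNormalCDF := fun x y hxy =>
  ENNReal.toReal_mono (measure_ne_top _ _) (measure_mono (Set.Iic_subset_Iic.mpr hxy))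

lemma measurable_stdNormalCDF : Measurable stdNormalCDF := stdNormalCDF_mono.measurable

lemma lintegral_comp_affine {f : ℝ → ℝ≥0∞} (hf : Measurable f) {A : ℝ} (hA : A ≠ 0) (B : ℝ) :
    ∫⁻ x, f x = ENNReal.ofReal |A| * ∫⁻ x, f (A * x + B) := by
  have hmap : Measure.map (fun x : ℝ => A * x + B) volume
      = ENNReal.ofReal |A⁻¹| • volume := by
    have : (fun x : ℝ => A * x + B) = (fun x : ℝ => x + B) ∘ (fun x : ℝ => A * x) := rfl
    rw [this, ← Measure.map_map (measurable_add_const B) (measurable_const_mul A)]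
    rw [Real.map_volume_mul_left hA, Measure.map_smul, map_add_right_eq_self]
  have h1 : ∫⁻ x, f (A * x + B) ∂volume
      = ∫⁻ y, f y ∂(Measure.map (fun x : ℝ => A * x + B) volume) := by
    rw [lintegral_map hf (by fun_prop)]
  rw [h1, hmap, lintegral_smul_measure, smul_eq_mul, ← mul_assoc, ← ENNReal.ofReal_mul (abs_nonneg _),
    abs_inv, mul_inv_cancel₀ (abs_ne_zero.mpr hA), ENNReal.ofReal_one, one_mul]

lemma gaussianPDFReal_swap_identity {c₁ c₂ ρ : ℝ} (h1 : 0 < c₁) (h2 : 0 < c₂)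
    (hρ2 : ρ ^ 2 = c₁ ^ 2 + c₂ ^ 2) (x s : ℝ) :
    gaussianPDFReal 0 1 x * gaussianPDFReal 0 1 ((ρ * s - c₁ * x) / c₂)
      = gaussianPDFReal 0 1 s * gaussianPDFReal 0 1 (ρ / c₂ * x + -(c₁ * s) / c₂) := by
  simp only [gaussianPDFReal, NNReal.coe_one, mul_one, sub_zero]
  have hc₂ : c₂ ≠ 0 := ne_of_gt h2
  have key : Real.exp (-x^2/2) * Real.exp (-(((ρ*s - c₁*x)/c₂))^2/2)
      = Real.exp (-s^2/2) * Real.exp (-((ρ/c₂*x + -(c₁*s)/c₂))^2/2) := by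
    rw [← Real.exp_add, ← Real.exp_add]
    congr 1
    field_simp
    linear_combination (x^2 - s^2) * hρ2
  calc (√(2*Real.pi))⁻¹ * Real.exp (-x^2/2) * ((√(2*Real.pi))⁻¹ * Real.exp (-(((ρ*s - c₁*x)/c₂))^2/2))
      = (√(2*Real.pi))⁻¹ * (√(2*Real.pi))⁻¹ * (Real.exp (-x^2/2) * Real.exp (-(((ρ*s - c₁*x)/c₂))^2/2)) := by ring
    _ = (√(2*Real.pi))⁻¹ * (√(2*Real.pi))⁻¹ * (Real.exp (-s^2/2) * Real.exp (-((ρ/c₂*x + -(c₁*s)/c₂))^2/2)) := by rw [key]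
    _ = (√(2*Real.pi))⁻¹ * Real.exp (-s^2/2) * ((√(2*Real.pi))⁻¹ * Real.exp (-((ρ/c₂*x + -(c₁*s)/c₂))^2/2)) := by ring

lemma lintegral_gaussian_pair_slice {c₁ c₂ ρ : ℝ} (h1 : 0 < c₁) (h2 : 0 < c₂) (hρ : 0 < ρ)
    (hρ2 : ρ ^ 2 = c₁ ^ 2 + c₂ ^ 2) (s : ℝ) :
    ∫⁻ x, gaussianPDF 0 1 x * gaussianPDF 0 1 ((ρ * s - c₁ * x) / c₂)
      = ENNReal.ofReal (c₂ / ρ) * gaussianPDF 0 1 s := by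
  have hgm := measurable_gaussianPDF (0:ℝ) (1:ℝ≥0)
  have hpt : ∀ x, gaussianPDF 0 1 x * gaussianPDF 0 1 ((ρ * s - c₁ * x) / c₂)
      = gaussianPDF 0 1 s * gaussianPDF 0 1 (ρ / c₂ * x + -(c₁ * s) / c₂) := by
    intro x
    simp only [gaussianPDF]
    rw [← ENNReal.ofReal_mul (gaussianPDFReal_nonneg _ _ _),
      ← ENNReal.ofReal_mul (gaussianPDFReal_nonneg _ _ _),
      gaussianPDFReal_swap_identity h1 h2 hρ2]
  simp_rw [hpt]
  have hm2 : Measurable fun x : ℝ => gaussianPDF 0 1 (ρ / c₂ * x + -(c₁ * s) / c₂) :=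
    hgm.comp (by fun_prop)
  rw [lintegral_const_mul _ hm2]
  have haff := lintegral_comp_affine hgm (A := ρ / c₂) (ne_of_gt (by positivity)) (-(c₁ * s) / c₂)
  rw [lintegral_gaussianPDF_eq_one 0 one_ne_zero] at haff
  have habs : |ρ / c₂| = ρ / c₂ := abs_of_pos (by positivity)
  rw [habs] at haff
  have hval : ∫⁻ x, gaussianPDF 0 1 (ρ / c₂ * x + -(c₁ * s) / c₂) = ENNReal.ofReal (c₂ / ρ) := by
    have := congrArg (fun z => ENNReal.ofReal (c₂ / ρ) * z) haff
    simp only [mul_one] at this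
    rw [this, ← mul_assoc, ← ENNReal.ofReal_mul (by positivity)]
    rw [show c₂ / ρ * (ρ / c₂) = 1 by field_simp, ENNReal.ofReal_one, one_mul]
  rw [hval, mul_comm]

lemma gaussian_pair_halfplane {c₁ c₂ u : ℝ} (h1 : 0 < c₁) (h2 : 0 < c₂) :
    ((gaussianReal 0 1).prod (gaussianReal 0 1)) {p : ℝ × ℝ | c₁ * p.1 + c₂ * p.2 ≤ u}
      = ENNReal.ofReal (stdNormalCDF (u / Real.sqrt (c₁ ^ 2 + c₂ ^ 2))) := by
  set ρ := Real.sqrt (c₁ ^ 2 + c₂ ^ 2) with hρdef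
  have hρ : 0 < ρ := Real.sqrt_pos.mpr (by positivity)
  have hρ2 : ρ ^ 2 = c₁ ^ 2 + c₂ ^ 2 := Real.sq_sqrt (by positivity)
  have hgm := measurable_gaussianPDF (0:ℝ) (1:ℝ≥0)
  have hC : MeasurableSet {p : ℝ × ℝ | c₁ * p.1 + c₂ * p.2 ≤ u} :=
    measurableSet_le (by fun_prop) measurable_const
  -- the inner product-form integrand
  set F : ℝ × ℝ → ℝ≥0∞ := fun q =>
    (Set.Iic (u / ρ)).indicator (fun _ => (1:ℝ≥0∞)) q.2
      * gaussianPDF 0 1 ((ρ * q.2 - c₁ * q.1) / c₂) with hFdef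
  have hF : Measurable F :=
    ((measurable_const.indicator measurableSet_Iic).comp measurable_snd).mul
      (hgm.comp (by fun_prop))
  have inner : ∀ x : ℝ, (gaussianReal 0 1) (Set.Iic ((u - c₁ * x) / c₂))
      = ENNReal.ofReal (ρ / c₂) * ∫⁻ s, F (x, s) := by
    intro x
    rw [gaussianReal_apply _ one_ne_zero, ← lintegral_indicator measurableSet_Iic _]
    have hfm : Measurable ((Set.Iic ((u - c₁ * x) / c₂)).indicator (gaussianPDF 0 1)) :=
      hgm.indicator measurableSet_Iic
    rw [lintegral_comp_affine hfm (A := ρ / c₂) (ne_of_gt (by positivity)) (-(c₁ * x) / c₂),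
      abs_of_pos (by positivity : (0:ℝ) < ρ / c₂)]
    congr 1
    apply lintegral_congr
    intro s
    have harg : ρ / c₂ * s + -(c₁ * x) / c₂ = (ρ * s - c₁ * x) / c₂ := by ring
    rw [harg]
    have hiff : (ρ * s - c₁ * x) / c₂ ∈ Set.Iic ((u - c₁ * x) / c₂) ↔ s ∈ Set.Iic (u / ρ) := by
      simp only [Set.mem_Iic]
      rw [div_le_div_iff_of_pos_right h2, sub_le_sub_iff_right, ← le_div_iff₀' hρ]
    by_cases hs : s ∈ Set.Iic (u / ρ)
    · rw [Set.indicator_of_mem (hiff.mpr hs), hFdef]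
      simp only [Set.indicator_of_mem hs, one_mul]
    · rw [Set.indicator_of_notMem (fun h => hs (hiff.mp h)), hFdef]
      simp only [Set.indicator_of_notMem hs, zero_mul]
  have hsec : ∀ x : ℝ, (Prod.mk x ⁻¹' {p : ℝ × ℝ | c₁ * p.1 + c₂ * p.2 ≤ u})
      = Set.Iic ((u - c₁ * x) / c₂) := by
    intro x
    ext y
    simp only [Set.mem_preimage, Set.mem_setOf_eq, Set.mem_Iic]
    rw [le_div_iff₀ h2]
    constructor <;> intro h <;> nlinarith [mul_comm y c₂]
  rw [Measure.prod_apply hC]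
  calc ∫⁻ x, (gaussianReal 0 1) (Prod.mk x ⁻¹' {p : ℝ × ℝ | c₁ * p.1 + c₂ * p.2 ≤ u})
        ∂(gaussianReal 0 1)
      = ∫⁻ x, (ENNReal.ofReal (ρ / c₂) * ∫⁻ s, F (x, s)) ∂(gaussianReal 0 1) := by
        apply lintegral_congr; intro x; rw [hsec x, inner x]
    _ = ENNReal.ofReal (ρ / c₂) * ∫⁻ x, (∫⁻ s, F (x, s)) ∂(gaussianReal 0 1) :=
        lintegral_const_mul _ hF.lintegral_prod_right'
    _ = ENNReal.ofReal (ρ / c₂)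
        * ∫⁻ x, gaussianPDF 0 1 x * ∫⁻ s, F (x, s) := by
        rw [gaussianReal_of_var_ne_zero 0 one_ne_zero,
          lintegral_withDensity_eq_lintegral_mul _ hgm hF.lintegral_prod_right']
        rfl
    _ = ENNReal.ofReal (ρ / c₂) * ∫⁻ x, ∫⁻ s, gaussianPDF 0 1 x * F (x, s) := by
        congr 1
        apply lintegral_congr; intro x
        exact (lintegral_const_mul _ (hF.comp measurable_prodMk_left)).symm
    _ = ENNReal.ofReal (ρ / c₂) * ∫⁻ s, ∫⁻ x, gaussianPDF 0 1 x * F (x, s) := by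
        congr 1
        exact lintegral_lintegral_swap ((hgm.comp measurable_fst).mul hF).aemeasurable
    _ = ENNReal.ofReal (ρ / c₂) * ∫⁻ s, ENNReal.ofReal (c₂ / ρ) *
          (Set.Iic (u / ρ)).indicator (gaussianPDF 0 1) s := by
        congr 1
        apply lintegral_congr; intro s
        have hx : ∀ x, gaussianPDF 0 1 x * F (x, s)
            = (Set.Iic (u / ρ)).indicator (fun _ => (1:ℝ≥0∞)) s
              * (gaussianPDF 0 1 x * gaussianPDF 0 1 ((ρ * s - c₁ * x) / c₂)) := by
          intro x; rw [hFdef]; ring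
        simp_rw [hx]
        have hmm : Measurable fun x : ℝ =>
            gaussianPDF 0 1 x * gaussianPDF 0 1 ((ρ * s - c₁ * x) / c₂) :=
          hgm.mul (hgm.comp (by fun_prop))
        rw [lintegral_const_mul _ hmm, lintegral_gaussian_pair_slice h1 h2 hρ hρ2 s]
        by_cases hs : s ∈ Set.Iic (u / ρ)
        · simp [Set.indicator_of_mem hs]
        · simp [Set.indicator_of_notMem hs]
    _ = ENNReal.ofReal (ρ / c₂) * (ENNReal.ofReal (c₂ / ρ) * ENNReal.ofReal (stdNormalCDF (u / ρ))) := by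
        rw [lintegral_const_mul _ (hgm.indicator measurableSet_Iic),
          lintegral_indicator measurableSet_Iic _, ← gaussianReal_apply _ one_ne_zero,
          ofReal_stdNormalCDF]
    _ = ENNReal.ofReal (stdNormalCDF (u / ρ)) := by
        rw [← mul_assoc, ← ENNReal.ofReal_mul (by positivity),
          show ρ / c₂ * (c₂ / ρ) = 1 by field_simp, ENNReal.ofReal_one, one_mul]

lemma expMeasure_eq_withDensity (r : ℝ) :
    expMeasure r = volume.withDensity (exponentialPDF r) := rfl

lemma expMeasure_Ici {r T : ℝ} (hr : 0 < r) (hT : 0 ≤ T) :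
    expMeasure r (Set.Ici T) = ENNReal.ofReal (Real.exp (-(r * T))) := by
  haveI := isProbabilityMeasure_expMeasure hr
  have hIic : expMeasure r (Set.Iic T) = ENNReal.ofReal (1 - Real.exp (-(r * T))) := by
    rw [expMeasure_eq_withDensity, withDensity_apply _ measurableSet_Iic,
      lintegral_exponentialPDF_eq_antiDeriv hr, if_pos hT]
  have hsing : expMeasure r {T} = 0 := by
    rw [expMeasure_eq_withDensity, withDensity_apply _ (measurableSet_singleton T),
      setLIntegral_measure_zero _ _ Real.volume_singleton]
  have hIio : expMeasure r (Set.Iio T) = expMeasure r (Set.Iic T) := by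
    rw [← Set.Iio_union_right, measure_union (by simp) (measurableSet_singleton T),
      hsing, add_zero]
  have he1 : Real.exp (-(r * T)) ≤ 1 := Real.exp_le_one_iff.mpr (by nlinarith)
  rw [← Set.compl_Iio, measure_compl measurableSet_Iio (measure_ne_top _ _), measure_univ,
    hIio, hIic, ← ENNReal.ofReal_one, ← ENNReal.ofReal_sub _ (by linarith)]
  norm_num

/-- Distribution function of the terminal price under counterparty risk:
`P(S_T ≤ S) = e^{−λT} Φ((ln(S/S₀) − a(T))/b(T))
  + Σ_i p_i ∫_0^T λ e^{−λt} Φ((1/b(t))(ln(S/(S₀(1−γ_i))) − a(t))) dt`. -/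
theorem counterparty_terminal_distribution
    {Ω : Type*} [MeasurableSpace Ω] (P : Measure Ω) [IsProbabilityMeasure P]
    (τ γ Z₁ Z₂ : Ω → ℝ)
    (hτm : Measurable τ) (hγm : Measurable γ) (hZ₁m : Measurable Z₁) (hZ₂m : Measurable Z₂)
    (hindep : iIndepFun ![τ, γ, Z₁, Z₂] P)
    (S₀ T σ₁ σ₂ lam : ℝ) (hS₀ : 0 < S₀) (hT : 0 < T) (hσ₁ : 0 < σ₁) (hσ₂ : 0 < σ₂)
    (hlam : 0 < lam) (r : ℝ)
    (γv : Fin 3 → ℝ) (hγv : ∀ i, γv i < 1)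
    (p : Fin 3 → ℝ) (hp : ∀ i, 0 ≤ p i) (hps : ∑ i, p i = 1)
    (hτlaw : Measure.map τ P = expMeasure lam)
    (hγlaw : Measure.map γ P = ∑ i, ENNReal.ofReal (p i) • Measure.dirac (γv i))
    (hZ₁law : Measure.map Z₁ P = gaussianReal 0 1)
    (hZ₂law : Measure.map Z₂ P = gaussianReal 0 1)
    (m : ℝ) (hm : m = ∑ i, p i * γv i)
    (a b : ℝ → ℝ)
    (ha : ∀ t, a t = (r + lam * m - σ₁ ^ 2 / 2) * t + (r - σ₂ ^ 2 / 2) * (T - t))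
    (hb : ∀ t, b t = Real.sqrt (σ₁ ^ 2 * t + σ₂ ^ 2 * (T - t)))
    (ST : Ω → ℝ)
    (hST : ∀ ω, ST ω =
      if T ≤ τ ω then
        S₀ * Real.exp ((r + lam * m - σ₁ ^ 2 / 2) * T + σ₁ * Real.sqrt T * Z₁ ω)
      else
        S₀ * (1 - γ ω) * Real.exp (a (τ ω) + σ₁ * Real.sqrt (τ ω) * Z₁ ω
          + σ₂ * Real.sqrt (T - τ ω) * Z₂ ω))
    : ∀ S : ℝ, 0 < S →
      (P {ω | ST ω ≤ S}).toReal
        = Real.exp (-lam * T) * stdNormalCDF ((Real.log (S / S₀) - a T) / b T)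
          + ∑ i, p i * ∫ t in (0:ℝ)..T, lam * Real.exp (-lam * t) *
              stdNormalCDF ((1 / b t) * (Real.log (S / (S₀ * (1 - γv i))) - a t)) := by
  intro S hS
  have haf : a = fun t => (r + lam * m - σ₁ ^ 2 / 2) * t + (r - σ₂ ^ 2 / 2) * (T - t) :=
    funext ha
  have hbf : b = fun t => Real.sqrt (σ₁ ^ 2 * t + σ₂ ^ 2 * (T - t)) := funext hb
  have ham : Measurable a := by rw [haf]; fun_prop
  have hbm : Measurable b := by
    rw [hbf]; exact Real.continuous_sqrt.measurable.comp (by fun_prop)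
  set d : ℝ := (Real.log (S / S₀) - a T) / b T with hd
  have hbT : b T = σ₁ * Real.sqrt T := by
    rw [hb, show σ₁ ^ 2 * T + σ₂ ^ 2 * (T - T) = σ₁ ^ 2 * T by ring,
      Real.sqrt_mul (sq_nonneg σ₁), Real.sqrt_sq hσ₁.le]
  have haT : a T = (r + lam * m - σ₁ ^ 2 / 2) * T := by rw [ha]; ring
  have hbTpos : 0 < b T := by rw [hbT]; positivity
  -- the two events
  set A : Set Ω := τ ⁻¹' (Set.Ici T) ∩ Z₁ ⁻¹' (Set.Iic d) with hA
  set C : Set ((ℝ × ℝ) × ℝ × ℝ) := {q | q.1.1 < T ∧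
    S₀ * (1 - q.1.2) * Real.exp (a q.1.1 + σ₁ * Real.sqrt q.1.1 * q.2.1
      + σ₂ * Real.sqrt (T - q.1.1) * q.2.2) ≤ S} with hC
  set V : Ω → (ℝ × ℝ) × ℝ × ℝ := fun ω => ((τ ω, γ ω), (Z₁ ω, Z₂ ω)) with hV
  have h11 : Measurable fun q : (ℝ × ℝ) × ℝ × ℝ => q.1.1 := measurable_fst.fst
  have h12 : Measurable fun q : (ℝ × ℝ) × ℝ × ℝ => q.1.2 := measurable_fst.snd
  have h21 : Measurable fun q : (ℝ × ℝ) × ℝ × ℝ => q.2.1 := measurable_snd.fst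
  have h22 : Measurable fun q : (ℝ × ℝ) × ℝ × ℝ => q.2.2 := measurable_snd.snd
  have hsqm : Measurable Real.sqrt := Real.continuous_sqrt.measurable
  have hCm : MeasurableSet C := by
    have hexp : Measurable fun q : (ℝ × ℝ) × ℝ × ℝ =>
        Real.exp (a q.1.1 + σ₁ * Real.sqrt q.1.1 * q.2.1
          + σ₂ * Real.sqrt (T - q.1.1) * q.2.2) :=
      Real.measurable_exp.comp (((ham.comp h11).add
        ((measurable_const.mul (hsqm.comp h11)).mul h21)).add
        ((measurable_const.mul (hsqm.comp (measurable_const.sub h11))).mul h22))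
    have hfm : Measurable fun q : (ℝ × ℝ) × ℝ × ℝ =>
        S₀ * (1 - q.1.2) * Real.exp (a q.1.1 + σ₁ * Real.sqrt q.1.1 * q.2.1
          + σ₂ * Real.sqrt (T - q.1.1) * q.2.2) :=
      (measurable_const.mul (measurable_const.sub h12)).mul hexp
    exact (measurableSet_lt h11 measurable_const).inter
      (measurableSet_le hfm measurable_const)
  have hVm : Measurable V := ((hτm.prodMk hγm).prodMk (hZ₁m.prodMk hZ₂m))
  have hAm : MeasurableSet A :=
    (hτm measurableSet_Ici).inter (hZ₁m measurableSet_Iic)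
  have hBm : MeasurableSet (V ⁻¹' C) := hVm hCm
  -- event splitting
  have hsplit : {ω | ST ω ≤ S} = A ∪ V ⁻¹' C := by
    ext ω
    simp only [Set.mem_setOf_eq, Set.mem_union, hST ω, hA, hC, hV, Set.mem_inter_iff,
      Set.mem_preimage, Set.mem_Ici, Set.mem_Iic, Set.mem_setOf_eq]
    by_cases h : T ≤ τ ω
    · rw [if_pos h]
      have hiff : S₀ * Real.exp ((r + lam * m - σ₁ ^ 2 / 2) * T + σ₁ * Real.sqrt T * Z₁ ω) ≤ S
          ↔ Z₁ ω ≤ d := by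
        rw [mul_comm S₀, ← le_div_iff₀ hS₀,
          ← Real.le_log_iff_exp_le (by positivity : (0:ℝ) < S / S₀), hd, haT, hbT,
          le_div_iff₀ (by rw [← hbT]; exact hbTpos)]
        constructor <;> intro hh <;> nlinarith [mul_comm (Z₁ ω) (σ₁ * Real.sqrt T)]
      constructor
      · intro hh; exact Or.inl ⟨h, hiff.mp hh⟩
      · rintro (⟨_, hz⟩ | ⟨hlt, _⟩)
        · exact hiff.mpr hz
        · exact absurd hlt (not_lt.mpr h)
    · rw [if_neg h]
      push_neg at h
      constructor
      · intro hh; exact Or.inr ⟨h, hh⟩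
      · rintro (⟨hge, _⟩ | ⟨_, hh⟩)
        · exact absurd hge (not_le.mpr h)
        · exact hh
  have hdisj : Disjoint A (V ⁻¹' C) := by
    rw [Set.disjoint_left]
    rintro ω ⟨h1, _⟩ ⟨h2, _⟩
    exact absurd h2 (not_lt.mpr h1)
  -- measure of A
  have hPA : P A = ENNReal.ofReal (Real.exp (-(lam * T)) * stdNormalCDF d) := by
    have hind : IndepFun τ Z₁ P := hindep.indepFun (show (0:Fin 4) ≠ 2 by decide)
    have := hind.measure_inter_preimage_eq_mul (Set.Ici T) (Set.Iic d)
      measurableSet_Ici measurableSet_Iic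
    rw [hA, this, ← Measure.map_apply hτm measurableSet_Ici,
      ← Measure.map_apply hZ₁m measurableSet_Iic, hτlaw, hZ₁law,
      expMeasure_Ici hlam hT.le, ← ofReal_stdNormalCDF,
      ← ENNReal.ofReal_mul (Real.exp_nonneg _)]
  -- law of V
  have hmeasall : ∀ i, Measurable (![τ, γ, Z₁, Z₂] i) := by
    intro i; fin_cases i <;> assumption
  have hpairτγ : Measure.map (fun ω => (τ ω, γ ω)) P
      = (expMeasure lam).prod (∑ i, ENNReal.ofReal (p i) • Measure.dirac (γv i)) := by
    exact ((indepFun_iff_map_prod_eq_prod_map_map hτm.aemeasurable hγm.aemeasurable).mp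
      (hindep.indepFun (show (0:Fin 4) ≠ 1 by decide))).trans (by rw [hτlaw, hγlaw])
  have hpairZ : Measure.map (fun ω => (Z₁ ω, Z₂ ω)) P
      = (gaussianReal 0 1).prod (gaussianReal 0 1) := by
    exact ((indepFun_iff_map_prod_eq_prod_map_map hZ₁m.aemeasurable hZ₂m.aemeasurable).mp
      (hindep.indepFun (show (2:Fin 4) ≠ 3 by decide))).trans (by rw [hZ₁law, hZ₂law])
  have hlawV : Measure.map V P
      = ((expMeasure lam).prod (∑ i, ENNReal.ofReal (p i) • Measure.dirac (γv i))).prod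
          ((gaussianReal 0 1).prod (gaussianReal 0 1)) := by
    have hpair : IndepFun (fun ω => (τ ω, γ ω)) (fun ω => (Z₁ ω, Z₂ ω)) P :=
      hindep.indepFun_prodMk_prodMk hmeasall 0 1 2 3
        (by decide) (by decide) (by decide) (by decide)
    exact ((indepFun_iff_map_prod_eq_prod_map_map (hτm.prodMk hγm).aemeasurable
      (hZ₁m.prodMk hZ₂m).aemeasurable).mp hpair).trans (by rw [hpairτγ, hpairZ])
  -- notation for second part
  set G2 : Measure (ℝ × ℝ) := (gaussianReal 0 1).prod (gaussianReal 0 1) with hG2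
  haveI : IsFiniteMeasure (∑ i : Fin 3, ENNReal.ofReal (p i) • Measure.dirac (γv i)) := by
    constructor
    rw [Measure.finset_sum_apply]
    exact ENNReal.sum_lt_top.mpr fun i _ => by
      simp [lt_top_iff_ne_top]
  haveI := isProbabilityMeasure_expMeasure hlam
  -- section sets
  have hsecval : ∀ (y : ℝ), y < 1 → ∀ t ∈ Set.Ioo (0:ℝ) T,
      G2 (Prod.mk (t, y) ⁻¹' C)
        = ENNReal.ofReal (stdNormalCDF
            ((1 / b t) * (Real.log (S / (S₀ * (1 - y))) - a t))) := by
    intro y hy t ht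
    have h1y : (0:ℝ) < 1 - y := by linarith
    have hKpos : 0 < S₀ * (1 - y) := by positivity
    have hc1 : 0 < σ₁ * Real.sqrt t := mul_pos hσ₁ (Real.sqrt_pos.mpr ht.1)
    have hc2 : 0 < σ₂ * Real.sqrt (T - t) :=
      mul_pos hσ₂ (Real.sqrt_pos.mpr (by linarith [ht.2]))
    have hset : Prod.mk (t, y) ⁻¹' C
        = {z : ℝ × ℝ | (σ₁ * Real.sqrt t) * z.1 + (σ₂ * Real.sqrt (T - t)) * z.2
            ≤ Real.log (S / (S₀ * (1 - y))) - a t} := by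
      ext z
      simp only [Set.mem_preimage, hC, Set.mem_setOf_eq]
      have hiff : S₀ * (1 - y) * Real.exp (a t + σ₁ * Real.sqrt t * z.1
            + σ₂ * Real.sqrt (T - t) * z.2) ≤ S
          ↔ (σ₁ * Real.sqrt t) * z.1 + (σ₂ * Real.sqrt (T - t)) * z.2
            ≤ Real.log (S / (S₀ * (1 - y))) - a t := by
        rw [mul_comm (S₀ * (1 - y)), ← le_div_iff₀ hKpos,
          ← Real.le_log_iff_exp_le (by positivity : (0:ℝ) < S / (S₀ * (1 - y)))]
        constructor <;> intro <;> linarith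
      simp [ht.2, hiff]
    rw [hset, hG2, gaussian_pair_halfplane hc1 hc2]
    have hsq : (σ₁ * Real.sqrt t) ^ 2 + (σ₂ * Real.sqrt (T - t)) ^ 2
        = σ₁ ^ 2 * t + σ₂ ^ 2 * (T - t) := by
      rw [mul_pow, mul_pow, Real.sq_sqrt ht.1.le,
        Real.sq_sqrt (by linarith [ht.2] : (0:ℝ) ≤ T - t)]
    rw [hsq, ← hb t, one_div_mul_eq_div]
  have hsec0 : ∀ (y t : ℝ), T ≤ t → Prod.mk (t, y) ⁻¹' C = (∅ : Set (ℝ × ℝ)) := by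
    intro y t htT
    ext z
    simp [hC, not_lt.mpr htT]
  -- measurability of section measures
  have hGm : Measurable fun q : ℝ × ℝ => G2 (Prod.mk q ⁻¹' C) :=
    measurable_measure_prodMk_left hCm
  have hGm1 : ∀ c : ℝ, Measurable fun t : ℝ => G2 (Prod.mk (t, c) ⁻¹' C) := fun c =>
    hGm.comp (measurable_id.prodMk measurable_const)
  -- the real integrand and integral
  set f : Fin 3 → ℝ → ℝ := fun i t => lam * Real.exp (-(lam * t)) *
      stdNormalCDF ((1 / b t) * (Real.log (S / (S₀ * (1 - γv i))) - a t)) with hf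
  set J : Fin 3 → ℝ := fun i => ∫ t in Set.Ioo (0:ℝ) T, f i t with hJ
  have hfm : ∀ i, Measurable (f i) := by
    intro i
    exact (measurable_const.mul (Real.measurable_exp.comp (by fun_prop))).mul
      (measurable_stdNormalCDF.comp ((measurable_const.div hbm).mul
        (measurable_const.sub ham)))
  have hfnn : ∀ i t, 0 ≤ f i t := by
    intro i t
    have h1 := stdNormalCDF_nonneg ((1 / b t) * (Real.log (S / (S₀ * (1 - γv i))) - a t))
    have h2 := Real.exp_nonneg (-(lam * t))
    positivity
  have hInt : ∀ i, IntegrableOn (f i) (Set.Ioo 0 T) volume := by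
    intro i
    refine Integrable.mono (g := fun _ => lam)
      (integrableOn_const measure_Ioo_lt_top.ne)
      (hfm i).aestronglyMeasurable ?_
    filter_upwards [ae_restrict_mem measurableSet_Ioo] with t ht
    rw [Real.norm_eq_abs, Real.norm_eq_abs, abs_of_nonneg (hfnn i t), abs_of_pos hlam]
    have hΦ1 := stdNormalCDF_le_one ((1 / b t) * (Real.log (S / (S₀ * (1 - γv i))) - a t))
    have hΦ0 := stdNormalCDF_nonneg ((1 / b t) * (Real.log (S / (S₀ * (1 - γv i))) - a t))
    have hexp1 : Real.exp (-(lam * t)) ≤ 1 :=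
      Real.exp_le_one_iff.mpr (by nlinarith [ht.1])
    have hexp0 : (0:ℝ) < Real.exp (-(lam * t)) := Real.exp_pos _
    simp only [hf]
    nlinarith [mul_nonneg (mul_nonneg hlam.le hexp0.le) (sub_nonneg.mpr hΦ1),
      mul_nonneg hlam.le (sub_nonneg.mpr hexp1)]
  have hJnn : ∀ i, 0 ≤ J i := fun i => integral_nonneg fun t => hfnn i t
  -- the key lintegral over the exponential law
  have hKi : ∀ i, ∫⁻ t, G2 (Prod.mk (t, γv i) ⁻¹' C) ∂(expMeasure lam)
      = ENNReal.ofReal (J i) := by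
    intro i
    have hpdfm : Measurable (exponentialPDF lam) :=
      (measurable_exponentialPDFReal lam).ennreal_ofReal
    rw [expMeasure_eq_withDensity,
      lintegral_withDensity_eq_lintegral_mul _ hpdfm (hGm1 (γv i))]
    have h0 : ∀ᵐ (t : ℝ) ∂volume, t ≠ 0 := by
      rw [MeasureTheory.ae_iff]
      simpa using Real.volume_singleton
    have hae : (fun t => (exponentialPDF lam * fun t => G2 (Prod.mk (t, γv i) ⁻¹' C)) t)
        =ᵐ[volume] (Set.Ioo (0:ℝ) T).indicator (fun t => ENNReal.ofReal (f i t)) := by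
      filter_upwards [h0] with t ht0
      by_cases hmem : t ∈ Set.Ioo (0:ℝ) T
      · rw [Set.indicator_of_mem hmem, Pi.mul_apply, exponentialPDF_of_nonneg hmem.1.le,
          hsecval (γv i) (hγv i) t hmem, hf, ← ENNReal.ofReal_mul (by positivity)]
      · rw [Set.indicator_of_notMem hmem, Pi.mul_apply]
        by_cases hneg : t < 0
        · rw [exponentialPDF_of_neg hneg, zero_mul]
        · push_neg at hneg
          have h0t : 0 < t := lt_of_le_of_ne hneg (Ne.symm ht0)
          have htT : T ≤ t := by
            by_contra hc
            push_neg at hc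
            exact hmem ⟨h0t, hc⟩
          rw [hsec0 (γv i) t htT]
          simp
    rw [lintegral_congr_ae hae, lintegral_indicator measurableSet_Ioo _,
      ← ofReal_integral_eq_lintegral_ofReal (hInt i) (ae_of_all _ fun t => hfnn i t)]
  -- measure of the second event
  have hPB : P (V ⁻¹' C) = ∑ i, ENNReal.ofReal (p i) * ENNReal.ofReal (J i) := by
    rw [← Measure.map_apply hVm hCm, hlawV, Measure.prod_apply hCm,
      lintegral_prod _ hGm.aemeasurable]
    have hinner : ∀ t : ℝ, (∫⁻ y, G2 (Prod.mk (t, y) ⁻¹' C)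
          ∂(∑ i, ENNReal.ofReal (p i) • Measure.dirac (γv i)))
        = ∑ i, ENNReal.ofReal (p i) * G2 (Prod.mk (t, γv i) ⁻¹' C) := by
      intro t
      rw [lintegral_finset_sum_measure]
      refine Finset.sum_congr rfl fun i _ => ?_
      have hyy : Measurable fun y : ℝ => G2 (Prod.mk (t, y) ⁻¹' C) :=
        hGm.comp measurable_prodMk_left
      rw [lintegral_smul_measure, lintegral_dirac' _ hyy, smul_eq_mul]
    simp_rw [hinner]
    rw [lintegral_finset_sum _ fun i _ => (hGm1 (γv i)).const_mul _]
    refine Finset.sum_congr rfl fun i _ => ?_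
    rw [lintegral_const_mul _ (hGm1 (γv i)), hKi i]
  -- assemble
  have htotal : P {ω | ST ω ≤ S}
      = ENNReal.ofReal (Real.exp (-(lam * T)) * stdNormalCDF d)
        + ∑ i, ENNReal.ofReal (p i) * ENNReal.ofReal (J i) := by
    rw [hsplit, measure_union hdisj hBm, hPA, hPB]
  rw [htotal, ENNReal.toReal_add ENNReal.ofReal_ne_top
      (ENNReal.sum_lt_top.mpr fun i _ =>
        ENNReal.mul_lt_top ENNReal.ofReal_lt_top ENNReal.ofReal_lt_top).ne,
    ENNReal.toReal_ofReal (mul_nonneg (Real.exp_nonneg _) (stdNormalCDF_nonneg d)),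
    ENNReal.toReal_sum fun i _ =>
      (ENNReal.mul_lt_top ENNReal.ofReal_lt_top ENNReal.ofReal_lt_top).ne]
  have hterm : ∀ i : Fin 3, (ENNReal.ofReal (p i) * ENNReal.ofReal (J i)).toReal
      = p i * J i := by
    intro i
    rw [← ENNReal.ofReal_mul (hp i), ENNReal.toReal_ofReal (mul_nonneg (hp i) (hJnn i))]
  simp_rw [hterm]
  have hJint : ∀ i : Fin 3, ∫ t in (0:ℝ)..T, lam * Real.exp (-lam * t) *
      stdNormalCDF ((1 / b t) * (Real.log (S / (S₀ * (1 - γv i))) - a t)) = J i := by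
    intro i
    rw [intervalIntegral.integral_of_le hT.le, MeasureTheory.integral_Ioc_eq_integral_Ioo, hJ]
    refine setIntegral_congr_fun measurableSet_Ioo fun t _ => ?_
    rw [hf, neg_mul]
  simp_rw [hJint]
  rw [neg_mul]
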